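/- A preordered space (X,≼) admits an injective monotone if and only if there exists a countable family of increasing subsets (A_n) such that for all x,y with x ≺ y some A_n separates x from y (x ∉ A_n and y ∈ A_n), and for all incomparable x,y some A_n separates either x from y or y from x. -/
import Mathlib

open scoped BigOperators

private lemma aux_sum_lt (a b : ℕ → ℝ)
    (ha : ∀ n, a n = 0 ∨ a n = (3:ℝ)⁻¹ ^ n)
    (hb : ∀ n, b n = 0 ∨ b n = (3:ℝ)⁻¹ ^ n)
    (N : ℕ) (hpre : ∀ n < N, a n = b n)
    (haN : a N = (3:ℝ)⁻¹ ^ N) (hbN : b N = 0) :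
    ∑' n, b n < ∑' n, a n := by
  have hgeo : Summable (fun n : ℕ => (3:ℝ)⁻¹ ^ n) :=
    summable_geometric_of_lt_one (by norm_num) (by norm_num)
  have hbound : ∀ (c : ℕ → ℝ), (∀ n, c n = 0 ∨ c n = (3:ℝ)⁻¹ ^ n) →
      (∀ n, 0 ≤ c n) ∧ (∀ n, c n ≤ (3:ℝ)⁻¹ ^ n) := by
    intro c hc
    constructor <;> intro n <;> rcases hc n with h | h <;> rw [h] <;> positivity
  obtain ⟨ha0, ha1⟩ := hbound a ha
  obtain ⟨hb0, hb1⟩ := hbound b hb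
  have hsa : Summable a := hgeo.of_nonneg_of_le ha0 ha1
  have hsb : Summable b := hgeo.of_nonneg_of_le hb0 hb1
  have hsplita := (Summable.sum_add_tsum_nat_add (N + 1) hsa).symm
  have hsplitb := (Summable.sum_add_tsum_nat_add (N + 1) hsb).symm
  rw [hsplita, hsplitb]
  have hsum_eq : ∑ i ∈ Finset.range N, a i = ∑ i ∈ Finset.range N, b i :=
    Finset.sum_congr rfl fun i hi => hpre i (Finset.mem_range.mp hi)
  rw [Finset.sum_range_succ, Finset.sum_range_succ, hsum_eq, haN, hbN]
  have htail_a : 0 ≤ ∑' n, a (n + (N + 1)) :=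
    tsum_nonneg fun n => ha0 _
  have htail_b : ∑' n, b (n + (N + 1)) ≤ (3:ℝ)⁻¹ ^ N / 2 := by
    have h1 : ∑' n, b (n + (N + 1)) ≤ ∑' n : ℕ, (3:ℝ)⁻¹ ^ (n + (N + 1)) := by
      apply Summable.tsum_le_tsum (fun n => hb1 _) (hsb.comp_injective (add_left_injective _))
      exact (summable_nat_add_iff (N+1)).mpr hgeo
    have h2 : ∑' n : ℕ, (3:ℝ)⁻¹ ^ (n + (N + 1)) = (3:ℝ)⁻¹ ^ N / 2 := by
      have : ∀ n : ℕ, (3:ℝ)⁻¹ ^ (n + (N + 1)) = (3:ℝ)⁻¹ ^ (N+1) * (3:ℝ)⁻¹ ^ n := by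
        intro n; rw [pow_add]; ring
      rw [tsum_congr this, tsum_mul_left, tsum_geometric_of_lt_one (by norm_num) (by norm_num)]
      rw [pow_succ]
      norm_num
      ring
    linarith
  have hN : (0:ℝ) < (3:ℝ)⁻¹ ^ N := by positivity
  linarith

/-- Injective monotones exist iff there is a countable family of increasing
sets separating strictly related pairs and (one-sidedly) incomparable pairs. -/
theorem injective_monotone_iff_increasing_family {X : Type*} (le : X → X → Prop)
    (hrefl : ∀ x, le x x) (htrans : ∀ x y z, le x y → le y z → le x z) :
    (∃ f : X → ℝ, (∀ x y, le x y → f x ≤ f y) ∧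
        (∀ x y, f x = f y → le x y ∧ le y x)) ↔
      (∃ A : ℕ → Set X,
        (∀ n, ∀ x ∈ A n, ∀ y, le x y → y ∈ A n) ∧
        (∀ x y, le x y → ¬ le y x → ∃ n, x ∉ A n ∧ y ∈ A n) ∧
        (∀ x y, ¬ le x y → ¬ le y x →
          ∃ n, (x ∉ A n ∧ y ∈ A n) ∨ (y ∉ A n ∧ x ∈ A n))) := by
  constructor
  · rintro ⟨f, hmono, hinj⟩
    refine ⟨fun n => {x | (((Denumerable.eqv ℚ).symm n : ℚ) : ℝ) < f x}, ?_, ?_, ?_⟩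
    · intro n x hx y hxy
      exact lt_of_lt_of_le hx (hmono _ _ hxy)
    · intro x y hxy hyx
      have hlt : f x < f y :=
        lt_of_le_of_ne (hmono _ _ hxy) (fun h => hyx (hinj _ _ h).2)
      obtain ⟨q, hq1, hq2⟩ := exists_rat_btwn hlt
      refine ⟨Denumerable.eqv ℚ q, ?_, ?_⟩ <;>
        simp only [Set.mem_setOf_eq, Equiv.symm_apply_apply, not_lt]
      · exact hq1.le
      · exact hq2
    · intro x y hxy hyx
      have hne : f x ≠ f y := fun h => hxy (hinj _ _ h).1
      rcases lt_or_gt_of_ne hne with h | h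
      · obtain ⟨q, hq1, hq2⟩ := exists_rat_btwn h
        refine ⟨Denumerable.eqv ℚ q, Or.inl ⟨?_, ?_⟩⟩ <;>
          simp only [Set.mem_setOf_eq, Equiv.symm_apply_apply, not_lt]
        · exact hq1.le
        · exact hq2
      · obtain ⟨q, hq1, hq2⟩ := exists_rat_btwn h
        refine ⟨Denumerable.eqv ℚ q, Or.inr ⟨?_, ?_⟩⟩ <;>
          simp only [Set.mem_setOf_eq, Equiv.symm_apply_apply, not_lt]
        · exact hq1.le
        · exact hq2
  · rintro ⟨A, hincr, hsep1, hsep2⟩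
    classical
    set χ : X → ℕ → ℝ := fun x n => if x ∈ A n then (3:ℝ)⁻¹ ^ n else 0 with hχ
    have hχ01 : ∀ x n, χ x n = 0 ∨ χ x n = (3:ℝ)⁻¹ ^ n := by
      intro x n; by_cases h : x ∈ A n <;> simp [hχ, h]
    refine ⟨fun x => ∑' n, χ x n, ?_, ?_⟩
    · intro x y hxy
      have hgeo : Summable (fun n : ℕ => (3:ℝ)⁻¹ ^ n) :=
        summable_geometric_of_lt_one (by norm_num) (by norm_num)
      have hsumm : ∀ z, Summable (χ z) := by
        intro z
        apply hgeo.of_nonneg_of_le <;> intro n <;> rcases hχ01 z n with h | h <;>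
          rw [h] <;> positivity
      apply Summable.tsum_le_tsum _ (hsumm x) (hsumm y)
      intro n
      by_cases h : x ∈ A n
      · simp [hχ, h, hincr n x h y hxy]
      · rcases hχ01 y n with h' | h' <;> simp [hχ, h, h'] <;> positivity
    · intro x y hfeq
      have hfeq' : ∑' n, χ x n = ∑' n, χ y n := hfeq
      have hiff : ∀ n, (x ∈ A n ↔ y ∈ A n) := by
        by_contra hcon
        push_neg at hcon
        have hex : ∃ n, ¬ (x ∈ A n ↔ y ∈ A n) := by
          obtain ⟨m, hm⟩ := hcon
          exact ⟨m, by tauto⟩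
        set N := Nat.find hex with hN
        have hNspec : ¬ (x ∈ A N ↔ y ∈ A N) := Nat.find_spec hex
        have hpre : ∀ n < N, χ x n = χ y n := by
          intro n hn
          have h2 : (x ∈ A n ↔ y ∈ A n) := not_not.mp (Nat.find_min hex hn)
          by_cases h : x ∈ A n
          · simp only [hχ, if_pos h, if_pos (h2.mp h)]
          · simp only [hχ, if_neg h, if_neg (fun hy => h (h2.mpr hy))]
        by_cases hxN : x ∈ A N
        · have hyN : y ∉ A N := fun h => hNspec ⟨fun _ => h, fun _ => hxN⟩
          have := aux_sum_lt (χ x) (χ y) (hχ01 x) (hχ01 y) N hpre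
            (if_pos hxN) (if_neg hyN)
          rw [hfeq'] at this
          exact lt_irrefl _ this
        · have hyN : y ∈ A N := by
            by_contra hyN
            exact hNspec ⟨fun h => absurd h hxN, fun h => absurd h hyN⟩
          have := aux_sum_lt (χ y) (χ x) (hχ01 y) (hχ01 x) N
            (fun n hn => (hpre n hn).symm) (if_pos hyN) (if_neg hxN)
          rw [hfeq'] at this
          exact lt_irrefl _ this
      by_cases hxy : le x y <;> by_cases hyx : le y x
      · exact ⟨hxy, hyx⟩
      · obtain ⟨n, hn1, hn2⟩ := hsep1 x y hxy hyx
        exact absurd ((hiff n).mpr hn2) hn1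
      · obtain ⟨n, hn1, hn2⟩ := hsep1 y x hyx hxy
        exact absurd ((hiff n).mp hn2) hn1
      · obtain ⟨n, hn⟩ := hsep2 x y hxy hyx
        rcases hn with ⟨hn1, hn2⟩ | ⟨hn1, hn2⟩
        · exact absurd ((hiff n).mpr hn2) hn1
        · exact absurd ((hiff n).mp hn2) hn1
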